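/- Let Φ be an n×d matrix with unit-norm columns, y = Φx* with supp(x*) = s*, and let l be an index set of size k with k ≥ 1 and δ_k ≤ 1/2. Then for any j ∈ l, the residual denominator satisfies ‖Φ_{l[j]}^{⊥ l∖{j}}‖₂² ≥ 1 − δ_k²/(1 − δ_{k−1}), where Φ_i^{⊥ r} := (I − P{Φ_r})Φ_i. -/

import Mathlib

open Matrix Finset

noncomputable section

/-- Number of nonzero entries of a vector. -/
def sparsity {d : ℕ} (x : Fin d → ℝ) : ℕ :=
  (Finset.univ.filter fun i => x i ≠ 0).card

/-- Squared Euclidean norm. -/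
def nsq {k : Type*} [Fintype k] (v : k → ℝ) : ℝ := ∑ i, v i ^ 2

/-- Euclidean (ℓ₂) norm. -/
def l2 {k : Type*} [Fintype k] (v : k → ℝ) : ℝ := Real.sqrt (nsq v)

/-- `Φ` satisfies the order-`t` restricted isometry property with constant `δ`. -/
def satRIP {n d : ℕ} (Φ : Matrix (Fin n) (Fin d) ℝ) (t : ℕ) (δ : ℝ) : Prop :=
  ∀ x : Fin d → ℝ, sparsity x ≤ t →
    (1 - δ) * nsq x ≤ nsq (Φ.mulVec x) ∧ nsq (Φ.mulVec x) ≤ (1 + δ) * nsq x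

/-- The order-`t` RIP constant of `Φ` : the smallest `δ ≥ 0` satisfying the RIP bounds. -/
def ripConst {n d : ℕ} (Φ : Matrix (Fin n) (Fin d) ℝ) (t : ℕ) : ℝ :=
  sInf {δ : ℝ | 0 ≤ δ ∧ satRIP Φ t δ}

/-- The submatrix of `Φ` consisting of the columns indexed by `s`. -/
def cols {n d : ℕ} (Φ : Matrix (Fin n) (Fin d) ℝ) (s : Finset (Fin d)) :
    Matrix (Fin n) {i // i ∈ s} ℝ := Φ.submatrix id (fun i => (i : Fin d))

/-- Orthogonal projection `P{Φ_s} = Φ_s (Φ_sᵀ Φ_s)⁻¹ Φ_sᵀ` onto the column span of `Φ_s`. -/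
def proj {n d : ℕ} (Φ : Matrix (Fin n) (Fin d) ℝ) (s : Finset (Fin d)) :
    Matrix (Fin n) (Fin n) ℝ :=
  cols Φ s * ((cols Φ s)ᵀ * cols Φ s)⁻¹ * (cols Φ s)ᵀ

/-- Least-squares residual `v^{⊥s} = (I - P{Φ_s}) v`. -/
def residVec {n d : ℕ} (Φ : Matrix (Fin n) (Fin d) ℝ) (s : Finset (Fin d)) (y : Fin n → ℝ) :
    Fin n → ℝ := y - (proj Φ s).mulVec y

/-- The `i`-th column of `Φ`. -/
def col {n d : ℕ} (Φ : Matrix (Fin n) (Fin d) ℝ) (i : Fin d) : Fin n → ℝ := fun k => Φ k i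

/-- `x` is a least-squares estimate of `y` supported on `s`:
it is supported on `s` and minimizes `‖y - Φ z‖₂` over all `z` supported on `s`. -/
def leastSq {n d : ℕ} (Φ : Matrix (Fin n) (Fin d) ℝ) (y : Fin n → ℝ) (s : Finset (Fin d))
    (x : Fin d → ℝ) : Prop :=
  (∀ i, i ∉ s → x i = 0) ∧
  ∀ z : Fin d → ℝ, (∀ i, i ∉ s → z i = 0) → nsq (y - Φ.mulVec x) ≤ nsq (y - Φ.mulVec z)

/-- The support of a vector, as a `Finset`. -/
def spt {d : ℕ} (x : Fin d → ℝ) : Finset (Fin d) :=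
  Finset.univ.filter fun i => x i ≠ 0

-- AUX START
lemma nsq_nonneg' {m : Type*} [Fintype m] (v : m → ℝ) : 0 ≤ nsq v :=
  Finset.sum_nonneg fun _ _ => sq_nonneg _

lemma nsq_eq_dot {m : Type*} [Fintype m] (v : m → ℝ) : nsq v = v ⬝ᵥ v := by
  simp [nsq, dotProduct, sq]

lemma le_eps' {a b : ℝ} (h : ∀ ε : ℝ, 0 < ε → a ≤ b + ε) : a ≤ b := by
  by_contra hc
  push_neg at hc
  have := h ((a - b) / 2) (by linarith)
  linarith

lemma satRIP_mono {n d : ℕ} (Φ : Matrix (Fin n) (Fin d) ℝ) {t t' : ℕ} {δ δ' : ℝ}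
    (ht : t' ≤ t) (hδ : δ ≤ δ') (h : satRIP Φ t δ) : satRIP Φ t' δ' := by
  intro x hx
  obtain ⟨h1, h2⟩ := h x (hx.trans ht)
  have hnn := nsq_nonneg' x
  constructor
  · exact le_trans (mul_le_mul_of_nonneg_right (by linarith) hnn) h1
  · exact h2.trans (mul_le_mul_of_nonneg_right (by linarith) hnn)

lemma satRIP_exists {n d : ℕ} (Φ : Matrix (Fin n) (Fin d) ℝ) (t : ℕ) :
    ∃ δ : ℝ, 0 ≤ δ ∧ satRIP Φ t δ := by
  refine ⟨(∑ i, ∑ j, Φ i j ^ 2) + 1, by positivity, fun x _ => ?_⟩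
  have hF : (0:ℝ) ≤ ∑ i, ∑ j, Φ i j ^ 2 := by positivity
  have hnn := nsq_nonneg' x
  have hΦ := nsq_nonneg' (Φ.mulVec x)
  have hb : nsq (Φ.mulVec x) ≤ (∑ i, ∑ j, Φ i j ^ 2) * nsq x := by
    unfold nsq
    rw [Finset.sum_mul]
    refine Finset.sum_le_sum fun i _ => ?_
    have : Φ.mulVec x i = ∑ j, Φ i j * x j := rfl
    rw [this]
    exact Finset.sum_mul_sq_le_sq_mul_sq univ _ _
  constructor
  · nlinarith
  · nlinarith

lemma ripConst_spec {n d : ℕ} (Φ : Matrix (Fin n) (Fin d) ℝ) (t : ℕ) :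
    0 ≤ ripConst Φ t ∧ satRIP Φ t (ripConst Φ t) := by
  set S : Set ℝ := {δ : ℝ | 0 ≤ δ ∧ satRIP Φ t δ} with hS
  have hrip : ripConst Φ t = sInf S := rfl
  rw [hrip]
  have hne : S.Nonempty := satRIP_exists Φ t
  have h0 : 0 ≤ sInf S := le_csInf hne fun δ hδ => hδ.1
  refine ⟨h0, fun x hx => ?_⟩
  have hnn := nsq_nonneg' x
  constructor
  · refine le_eps' fun ε hε => ?_
    have hε' : 0 < ε / (nsq x + 1) := by positivity
    obtain ⟨δ, hδS, hδlt⟩ := Real.lt_sInf_add_pos hne hε'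
    obtain ⟨h1, _⟩ := hδS.2 x hx
    have : (1 - sInf S) * nsq x ≤ (1 - δ) * nsq x + (ε / (nsq x + 1)) * nsq x := by
      nlinarith
    have h2 : (ε / (nsq x + 1)) * nsq x ≤ ε := by
      rw [div_mul_eq_mul_div, div_le_iff₀ (by linarith)]
      nlinarith
    linarith
  · refine le_eps' fun ε hε => ?_
    have hε' : 0 < ε / (nsq x + 1) := by positivity
    obtain ⟨δ, hδS, hδlt⟩ := Real.lt_sInf_add_pos hne hε'
    obtain ⟨_, h2⟩ := hδS.2 x hx
    have h3 : (1 + δ) * nsq x ≤ (1 + sInf S) * nsq x + (ε / (nsq x + 1)) * nsq x := by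
      nlinarith
    have h4 : (ε / (nsq x + 1)) * nsq x ≤ ε := by
      rw [div_mul_eq_mul_div, div_le_iff₀ (by linarith)]
      nlinarith
    linarith

lemma ripConst_mono {n d : ℕ} (Φ : Matrix (Fin n) (Fin d) ℝ) {t t' : ℕ} (h : t' ≤ t) :
    ripConst Φ t' ≤ ripConst Φ t := by
  refine csInf_le_csInf ⟨0, fun δ hδ => hδ.1⟩ (satRIP_exists Φ t) fun δ hδ => ?_
  exact ⟨hδ.1, satRIP_mono Φ h le_rfl hδ.2⟩

/-- extension of a vector on a subtype by zero -/
def ext0 {d : ℕ} (s : Finset (Fin d)) (u : {i // i ∈ s} → ℝ) : Fin d → ℝ :=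
  fun i => if h : i ∈ s then u ⟨i, h⟩ else 0

lemma ext0_spt {d : ℕ} (s : Finset (Fin d)) (u : {i // i ∈ s} → ℝ) (i : Fin d)
    (hi : i ∉ s) : ext0 s u i = 0 := dif_neg hi

lemma sparsity_ext0 {d : ℕ} (s : Finset (Fin d)) (u : {i // i ∈ s} → ℝ) :
    sparsity (ext0 s u) ≤ s.card := by
  refine Finset.card_le_card fun i hi => ?_
  rw [Finset.mem_filter] at hi
  by_contra hc
  exact hi.2 (ext0_spt s u i hc)

lemma sum_ext0 {d : ℕ} (s : Finset (Fin d)) (f : Fin d → ℝ) (u : {i // i ∈ s} → ℝ) :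
    ∑ i, f i * ext0 s u i = ∑ i : {i // i ∈ s}, f i * u i := by
  rw [Finset.univ_eq_attach,
    ← Finset.sum_subset (Finset.subset_univ s)
      (fun i _ hi => by rw [ext0_spt s u i hi, mul_zero]),
    ← Finset.sum_attach s (fun i => f i * ext0 s u i)]
  exact Finset.sum_congr rfl fun i _ => by simp [ext0]

lemma mulVec_ext0 {n d : ℕ} (Φ : Matrix (Fin n) (Fin d) ℝ) (s : Finset (Fin d))
    (u : {i // i ∈ s} → ℝ) : Φ.mulVec (ext0 s u) = (cols Φ s).mulVec u := by
  funext i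
  show ∑ jj, Φ i jj * ext0 s u jj = ∑ jj : {i // i ∈ s}, cols Φ s i jj * u jj
  rw [sum_ext0]
  rfl

lemma nsq_ext0 {d : ℕ} (s : Finset (Fin d)) (u : {i // i ∈ s} → ℝ) :
    nsq (ext0 s u) = nsq u := by
  unfold nsq
  rw [Finset.univ_eq_attach,
    ← Finset.sum_subset (Finset.subset_univ s)
      (fun i _ hi => by rw [ext0_spt s u i hi]; ring),
    ← Finset.sum_attach s (fun i => ext0 s u i ^ 2)]
  exact Finset.sum_congr rfl fun i _ => by simp [ext0]

lemma nsq_sub_dot {m : Type*} [Fintype m] (a b : m → ℝ) :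
    nsq (a - b) = nsq a - 2 * (a ⬝ᵥ b) + nsq b := by
  have h : ∀ x, (a x - b x) ^ 2 = a x ^ 2 - 2 * (a x * b x) + b x ^ 2 := fun x => by ring
  simp_rw [nsq, dotProduct, Pi.sub_apply, h]
  rw [Finset.sum_add_distrib, Finset.sum_sub_distrib, Finset.mul_sum]

lemma nsq_add_dot {m : Type*} [Fintype m] (a b : m → ℝ) :
    nsq (a + b) = nsq a + 2 * (a ⬝ᵥ b) + nsq b := by
  have h : ∀ x, (a x + b x) ^ 2 = a x ^ 2 + 2 * (a x * b x) + b x ^ 2 := fun x => by ring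
  simp_rw [nsq, dotProduct, Pi.add_apply, h]
  rw [Finset.sum_add_distrib, Finset.sum_add_distrib, Finset.mul_sum]

lemma nsq_pos_of_ne {m : Type*} [Fintype m] (v : m → ℝ) (hv : v ≠ 0) : 0 < nsq v := by
  rcases lt_or_eq_of_le (nsq_nonneg' v) with h | h
  · exact h
  · exfalso
    apply hv
    funext i
    have := (Finset.sum_eq_zero_iff_of_nonneg (fun i _ => sq_nonneg (v i))).1 h.symm i (by simp)
    exact pow_eq_zero_iff (n := 2) (by norm_num) |>.1 this

lemma nsq_smul {m : Type*} [Fintype m] (t : ℝ) (v : m → ℝ) : nsq (t • v) = t ^ 2 * nsq v := by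
  simp only [nsq, Pi.smul_apply, smul_eq_mul, Finset.mul_sum]
  exact Finset.sum_congr rfl fun i _ => by ring


set_option maxHeartbeats 1000000 in
set_option maxHeartbeats 1000000 in
/-- with unit-norm columns, `|l| = k ≥ 1` and `δ_k ≤ 1/2`, for any
`j ∈ l` the residual denominator satisfies
`‖Φ_j^{⊥ l∖{j}}‖₂² ≥ 1 − δ_k²/(1 − δ_{k−1})`. -/
theorem stmt8 {n d : ℕ} (Φ : Matrix (Fin n) (Fin d) ℝ)
    (hunit : ∀ j, nsq (_root_.col Φ j) = 1)
    (xs : Fin d → ℝ)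
    (l : Finset (Fin d)) (k : ℕ) (hk : l.card = k) (hk1 : 1 ≤ k)
    (hδ : ripConst Φ k ≤ 1 / 2)
    (j : Fin d) (hj : j ∈ l) :
    1 - ripConst Φ k ^ 2 / (1 - ripConst Φ (k - 1)) ≤
      nsq (residVec Φ (l.erase j) (_root_.col Φ j)) := by
  classical
  obtain ⟨hδk0, hRIPk⟩ := ripConst_spec Φ k
  obtain ⟨hδ10, hRIP1⟩ := ripConst_spec Φ (k - 1)
  set δk := ripConst Φ k with hδkdef
  set δ1 := ripConst Φ (k - 1) with hδ1def
  have hmono : δ1 ≤ δk := ripConst_mono Φ (Nat.sub_le k 1)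
  have hδ1half : δ1 ≤ 1 / 2 := hmono.trans hδ
  have h1δ : (0:ℝ) < 1 - δ1 := by linarith
  set r := l.erase j with hr
  have hjr : j ∉ r := Finset.notMem_erase j l
  have hcardr : r.card = k - 1 := by rw [hr, Finset.card_erase_of_mem hj, hk]
  set A := cols Φ r with hA
  set v := _root_.col Φ j with hv
  set w := Aᵀ.mulVec v with hw
  set G := Aᵀ * A with hG
  -- F1 : RIP bound for vectors supported in r
  have F1 : ∀ z : {i // i ∈ r} → ℝ, (1 - δ1) * nsq z ≤ nsq (A.mulVec z) := by
    intro z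
    have hsp : sparsity (ext0 r z) ≤ k - 1 := hcardr ▸ sparsity_ext0 r z
    have := (hRIP1 (ext0 r z) hsp).1
    rwa [mulVec_ext0, nsq_ext0] at this
  -- dot product transfer
  have hdotA : ∀ z : {i // i ∈ r} → ℝ, v ⬝ᵥ A.mulVec z = w ⬝ᵥ z := by
    intro z
    rw [Matrix.dotProduct_mulVec, hw, Matrix.mulVec_transpose]
  -- quadratic form identity
  have hquad : ∀ z : {i // i ∈ r} → ℝ, z ⬝ᵥ G.mulVec z = nsq (A.mulVec z) := by
    intro z
    rw [hG, ← Matrix.mulVec_mulVec, Matrix.dotProduct_mulVec, Matrix.vecMul_transpose,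
      ← nsq_eq_dot]
  -- membership / sparsity for the polarization vectors
  have hsup : ∀ (t : ℝ) (σ : ℝ), sparsity (Pi.single j σ + t • ext0 r w) ≤ k := by
    intro t σ
    rw [← hk]
    refine Finset.card_le_card fun i hi => ?_
    rw [Finset.mem_filter] at hi
    by_contra hc
    apply hi.2
    have hij : i ≠ j := fun h => hc (h ▸ hj)
    have hir : i ∉ r := fun h => hc (Finset.mem_of_mem_erase h)
    simp [Pi.single_apply, hij, ext0_spt r w i hir]
  have hmv : ∀ (t : ℝ) (σ : ℝ),
      Φ.mulVec (Pi.single j σ + t • ext0 r w) = σ • v + t • A.mulVec w := by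
    intro t σ
    rw [Matrix.mulVec_add, Matrix.mulVec_smul, mulVec_ext0, Matrix.mulVec_single]
    funext i
    simp [hv, _root_.col, mul_comm, hA]
  have hnsqx : ∀ (t : ℝ) (σ : ℝ),
      nsq (Pi.single j σ + t • ext0 r w) = σ ^ 2 + t ^ 2 * nsq w := by
    intro t σ
    rw [nsq_add_dot, nsq_smul, nsq_ext0]
    have h1 : nsq (Pi.single j σ : Fin d → ℝ) = σ ^ 2 := by
      simp only [nsq]
      rw [Finset.sum_eq_single j]
      · simp
      · intro b _ hb; simp [Pi.single_apply, hb]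
      · simp
    have h2 : (Pi.single j σ : Fin d → ℝ) ⬝ᵥ (t • ext0 r w) = 0 := by
      rw [single_dotProduct]
      simp [ext0_spt r w j hjr]
    rw [h1, h2]
    ring
  have hvdotAw : v ⬝ᵥ A.mulVec w = nsq w := by rw [hdotA, nsq_eq_dot]
  -- F2 : nsq w ≤ δk ^ 2
  have F2 : nsq w ≤ δk ^ 2 := by
    have key : ∀ t : ℝ, 4 * (t * nsq w) ≤ 2 * δk * (1 + t ^ 2 * nsq w) := by
      intro t
      have hplus := (hRIPk (Pi.single j 1 + t • ext0 r w) (hsup t 1)).2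
      have hminus := (hRIPk (Pi.single j 1 + (-t) • ext0 r w) (hsup (-t) 1)).1
      rw [hmv, hnsqx] at hplus
      rw [hmv, hnsqx] at hminus
      have e1 : nsq ((1:ℝ) • v + t • A.mulVec w)
          = nsq v + 2 * (t * (v ⬝ᵥ A.mulVec w)) + t ^ 2 * nsq (A.mulVec w) := by
        rw [one_smul, nsq_add_dot, nsq_smul, dotProduct_smul]
        simp [smul_eq_mul]
      have e2 : nsq ((1:ℝ) • v + (-t) • A.mulVec w)
          = nsq v - 2 * (t * (v ⬝ᵥ A.mulVec w)) + t ^ 2 * nsq (A.mulVec w) := by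
        rw [one_smul, nsq_add_dot, nsq_smul, dotProduct_smul]
        simp only [smul_eq_mul]
        ring
      rw [e1, hvdotAw] at hplus
      rw [e2, hvdotAw] at hminus
      have : (1:ℝ) ^ 2 = 1 := one_pow 2
      nlinarith [sq_nonneg t, nsq_nonneg' w]
    have key' : ∀ t : ℝ, 0 ≤ 2 * δk * nsq w * t ^ 2 - 4 * nsq w * t + 2 * δk :=
      fun t => by nlinarith [key t]
    rcases eq_or_lt_of_le hδk0 with h0 | h0
    · have h1 := key' 1
      have hwnn := nsq_nonneg' w
      nlinarith
    · have hne : δk ≠ 0 := h0.ne'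
      have h := key' (1 / δk)
      have h2 : 0 ≤ δk * (2 * δk * nsq w * (1 / δk) ^ 2 - 4 * nsq w * (1 / δk) + 2 * δk) :=
        mul_nonneg h0.le h
      have e : δk * (2 * δk * nsq w * (1 / δk) ^ 2 - 4 * nsq w * (1 / δk) + 2 * δk)
          = -2 * nsq w + 2 * δk ^ 2 := by
        field_simp
        ring
      rw [e] at h2
      linarith
  -- F3 : G is positive definite
  have F3 : G.PosDef := by
    refine Matrix.posDef_iff_dotProduct_mulVec.2 ⟨?_, ?_⟩
    · show Gᴴ = G
      ext i j
      simp [hG, Matrix.mul_apply, Matrix.conjTranspose_apply, Matrix.transpose_apply, mul_comm]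
    · intro z hz
      have h1 := F1 z
      have h2 : (0:ℝ) < nsq z := nsq_pos_of_ne z hz
      have : star z ⬝ᵥ G.mulVec z = z ⬝ᵥ G.mulVec z := by rw [star_trivial]
      rw [this, hquad z]
      nlinarith
  have hdet : IsUnit G.det := F3.det_pos.ne'.isUnit
  have hGinv : G * G⁻¹ = 1 := Matrix.mul_nonsing_inv G hdet
  set u := G⁻¹.mulVec w with hu
  have hGu : G.mulVec u = w := by
    rw [hu, Matrix.mulVec_mulVec, hGinv, Matrix.one_mulVec]
  have hPv : (proj Φ r).mulVec v = A.mulVec u := by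
    rw [proj, ← hA, ← hG, ← Matrix.mulVec_mulVec, ← Matrix.mulVec_mulVec, ← hw, ← hu]
  clear_value u
  clear hu hGinv hdet F3
  set q := w ⬝ᵥ u with hq
  clear_value q
  clear_value G
  have hAu : nsq (A.mulVec u) = q := by
    rw [← hquad u, hGu, hq, dotProduct_comm]
  have hqlow : (1 - δ1) * nsq u ≤ q := hAu ▸ F1 u
  have hvu : v ⬝ᵥ A.mulVec u = w ⬝ᵥ u := hdotA u
  clear hdotA hsup hmv hnsqx hvdotAw F1 hquad hGu
  clear_value w
  clear_value v
  clear_value A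
  clear_value r
  clear_value δ1
  clear_value δk
  have hq0 : 0 ≤ q := le_trans (by nlinarith [nsq_nonneg' u]) hqlow
  have hCS : q ^ 2 ≤ nsq w * nsq u := by
    rw [hq]
    simpa [dotProduct, nsq] using Finset.sum_mul_sq_le_sq_mul_sq univ w u
  have F4 : q ≤ δk ^ 2 / (1 - δ1) := by
    rw [le_div_iff₀ h1δ]
    rcases eq_or_lt_of_le hq0 with h0q | h0q
    · nlinarith [sq_nonneg δk]
    · nlinarith [mul_le_mul_of_nonneg_right F2 (nsq_nonneg' u),
        mul_le_mul_of_nonneg_left hqlow (sq_nonneg δk)]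
  have final : nsq (residVec Φ r v) = 1 - q := by
    rw [residVec]
    show nsq (v - (proj Φ r).mulVec v) = 1 - q
    rw [hPv, nsq_sub_dot, hAu, hvu, ← hq, hv, hunit j]
    ring
  rw [final]
  linarith [F4]
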